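/- For every real ε > 0 there exists an instance with common requirements such that the ratio m/m' of the optimal single-instanced machine count to the optimal multi-instanced machine count satisfies 2(1 − ε) < m/m' < 2. Concretely, for n > 2 applications with q_i = 1, Q = 3, p = n, P = 2n − 1, we have m = n and m' = ⌈n²/(2n − 1)⌉, and n / ⌈n²/(2n−1)⌉ → 2 as n → ∞. -/

import Mathlib

/-- Single-instanced model: `n` applications with unit memory and load `n` each,
machines with memory capacity `3` and CPU capacity `2n - 1`. -/
def FeasibleSingle (n k : ℕ) (f : Fin n → Fin k) : Prop :=
  ∀ j, (Finset.univ.filter (fun i => f i = j)).card ≤ 3 ∧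
       ((Finset.univ.filter (fun i => f i = j)).card : ℚ) * (n : ℚ) ≤ 2 * n - 1

/-- Multi-instanced model for the same instance family. -/
def FeasibleMulti (n k : ℕ) (x : Fin n → Fin k → ℚ) : Prop :=
  (∀ i j, 0 ≤ x i j) ∧
  (∀ i, (n : ℚ) ≤ ∑ j, x i j) ∧
  (∀ j, ∑ i, x i j ≤ 2 * (n : ℚ) - 1) ∧
  (∀ j, (Finset.univ.filter (fun i => x i j ≠ 0)).card ≤ 3)

/- ### Auxiliary machinery -/

lemma RatioAux.tele (k : ℕ) (g : ℕ → ℚ) :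
    ∑ j : Fin k, (g (j + 1) - g j) = g k - g 0 := by
  rw [Fin.sum_univ_eq_sum_range (fun j => g (j+1) - g j) k]
  exact Finset.sum_range_sub g k

/-- `Fq n a b` = length of `[0, a·n) ∩ [0, b·(2n-1))`. -/
noncomputable def RatioAux.Fq (n a b : ℕ) : ℚ :=
  min ((a:ℚ) * n) ((b:ℚ) * (2 * (n:ℚ) - 1))

/-- `xq n i j` = length of `[i·n, (i+1)·n) ∩ [j·(2n-1), (j+1)·(2n-1))`. -/
noncomputable def RatioAux.xq (n i j : ℕ) : ℚ :=
  Fq n (i+1) (j+1) - Fq n (i+1) j - (Fq n i (j+1) - Fq n i j)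

namespace RatioAux

lemma xq_nonneg (n : ℕ) (hn : 3 ≤ n) (i j : ℕ) : 0 ≤ xq n i j := by
  have hn' : (3:ℚ) ≤ n := by exact_mod_cast hn
  have hi : (0:ℚ) ≤ i := Nat.cast_nonneg i
  have hj : (0:ℚ) ≤ j := Nat.cast_nonneg j
  have e1 : (i:ℚ)*n ≤ ((i:ℚ)+1)*n := by nlinarith
  have e2 : (j:ℚ)*(2*(n:ℚ)-1) ≤ ((j:ℚ)+1)*(2*(n:ℚ)-1) := by nlinarith
  have e3 : (0:ℚ) ≤ (j:ℚ)*(2*(n:ℚ)-1) := by nlinarith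
  have e4 : (0:ℚ) ≤ (i:ℚ)*n := by nlinarith
  unfold xq Fq
  push_cast
  simp only [min_def]
  split_ifs <;> linarith

lemma xq_row (n k : ℕ) (hn : 3 ≤ n) (hk : (n:ℚ)^2 ≤ (k:ℚ)*(2*(n:ℚ)-1)) (i : ℕ)
    (hi : i < n) : ∑ j : Fin k, xq n i j = n := by
  have hn' : (3:ℚ) ≤ n := by exact_mod_cast hn
  have hi' : (i:ℚ) + 1 ≤ n := by exact_mod_cast hi
  have h1 : ((i:ℚ)+1) * n ≤ (k:ℚ)*(2*(n:ℚ)-1) := by nlinarith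
  have h0 : (i:ℚ) * n ≤ (k:ℚ)*(2*(n:ℚ)-1) := by nlinarith [Nat.cast_nonneg (α := ℚ) i]
  calc ∑ j : Fin k, xq n i j
      = ∑ j : Fin k, ((fun b => Fq n (i+1) b - Fq n i b) (j+1)
          - (fun b => Fq n (i+1) b - Fq n i b) (j:ℕ)) := by
        refine Finset.sum_congr rfl fun j _ => ?_
        simp only [xq]; ring
    _ = (Fq n (i+1) k - Fq n i k) - (Fq n (i+1) 0 - Fq n i 0) :=
        tele k (fun b => Fq n (i+1) b - Fq n i b)
    _ = n := by
        unfold Fq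
        push_cast
        rw [min_eq_left h1, min_eq_left h0]
        have h2 : (0:ℚ) * (2*(n:ℚ)-1) = 0 := by ring
        rw [h2, min_eq_right (by nlinarith [Nat.cast_nonneg (α := ℚ) i]),
          min_eq_right (by nlinarith [Nat.cast_nonneg (α := ℚ) i])]
        ring

lemma xq_col (n : ℕ) (hn : 3 ≤ n) (j : ℕ) :
    ∑ i : Fin n, xq n i j ≤ 2*(n:ℚ)-1 := by
  have hn' : (3:ℚ) ≤ n := by exact_mod_cast hn
  have hj : (0:ℚ) ≤ j := Nat.cast_nonneg j
  calc ∑ i : Fin n, xq n i j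
      = ∑ i : Fin n, ((fun a => Fq n a (j+1) - Fq n a j) (i+1)
          - (fun a => Fq n a (j+1) - Fq n a j) (i:ℕ)) := by
        refine Finset.sum_congr rfl fun i _ => ?_
        simp only [xq]
    _ = (Fq n n (j+1) - Fq n n j) - (Fq n 0 (j+1) - Fq n 0 j) :=
        tele n (fun a => Fq n a (j+1) - Fq n a j)
    _ ≤ 2*(n:ℚ)-1 := by
        unfold Fq
        push_cast
        have e2 : (j:ℚ)*(2*(n:ℚ)-1) ≤ ((j:ℚ)+1)*(2*(n:ℚ)-1) := by nlinarith
        have e3 : (0:ℚ) ≤ (j:ℚ)*(2*(n:ℚ)-1) := by nlinarith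
        simp only [min_def]
        split_ifs <;> linarith

lemma xq_supp (n : ℕ) (hn : 3 ≤ n) (i j : ℕ) (h : xq n i j ≠ 0) :
    (j:ℚ)*(2*(n:ℚ)-1) < ((i:ℚ)+1)*n ∧ (i:ℚ)*n < ((j:ℚ)+1)*(2*(n:ℚ)-1) := by
  have hn' : (3:ℚ) ≤ n := by exact_mod_cast hn
  by_contra hc
  rw [not_and_or, not_lt, not_lt] at hc
  apply h
  have hi : (0:ℚ) ≤ i := Nat.cast_nonneg i
  have hj : (0:ℚ) ≤ j := Nat.cast_nonneg j
  have e1 : (i:ℚ)*n ≤ ((i:ℚ)+1)*n := by nlinarith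
  have e2 : (j:ℚ)*(2*(n:ℚ)-1) ≤ ((j:ℚ)+1)*(2*(n:ℚ)-1) := by nlinarith
  unfold xq Fq
  push_cast
  rcases hc with h1 | h1 <;>
  · simp only [min_def]; split_ifs <;> linarith

lemma xq_card (n : ℕ) (hn : 3 ≤ n) (j : ℕ) :
    (Finset.univ.filter (fun i : Fin n => xq n (i:ℕ) j ≠ 0)).card ≤ 3 := by
  have hn0 : 0 < n := by omega
  set L : ℕ := 2*n - 1 with hLdef
  set a : ℕ := j*L / n with ha
  have hLq : ((L:ℕ):ℚ) = 2*(n:ℚ) - 1 := by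
    rw [hLdef]; push_cast [Nat.cast_sub (by omega : 1 ≤ 2*n)]; ring
  have key : ∀ u v : ℕ, u*n < v*n → u < v :=
    fun u v h => lt_of_mul_lt_mul_right h (Nat.zero_le n)
  calc (Finset.univ.filter (fun i : Fin n => xq n (i:ℕ) j ≠ 0)).card
      ≤ (Finset.Icc a (a+2)).card := by
        apply Finset.card_le_card_of_injOn (fun i : Fin n => (i:ℕ))
        · intro i hi
          simp only [Finset.mem_coe, Finset.mem_filter] at hi
          obtain ⟨h1, h2⟩ := xq_supp n hn i j hi.2
          have h1' : j*L < ((i:ℕ)+1)*n := by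
            have : ((j*L : ℕ) : ℚ) < (((i:ℕ)+1)*n : ℕ) := by push_cast [hLq]; linarith
            exact_mod_cast this
          have h2' : (i:ℕ)*n < (j+1)*L := by
            have : (((i:ℕ)*n : ℕ) : ℚ) < (((j+1)*L : ℕ) : ℚ) := by push_cast [hLq]; linarith
            exact_mod_cast this
          have haa : a*n ≤ j*L := Nat.div_mul_le_self _ _
          have hmod : j*L % n < n := Nat.mod_lt _ hn0
          have hdm : n*(j*L/n) + j*L%n = j*L := Nat.div_add_mod _ _
          have hub : j*L < (a+1)*n := by
            have e : (a+1)*n = n*(j*L/n) + n := by rw [← ha]; ring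
            linarith
          have low : a ≤ (i:ℕ) := by
            have := key a ((i:ℕ)+1) (lt_of_le_of_lt haa h1')
            omega
          have high : (i:ℕ) < a+3 := by
            apply key
            have e : (a+3)*n = (a+1)*n + 2*n := by ring
            have e2 : (j+1)*L = j*L + L := by ring
            have hLn : L < 2*n := by omega
            linarith
          simp only [Finset.mem_coe, Finset.mem_Icc]
          omega
        · intro u _ v _ h
          exact Fin.val_injective h
    _ = 3 := by rw [Nat.card_Icc]; omega

lemma single_least (n : ℕ) (hn : 3 ≤ n) :
    IsLeast {k : ℕ | ∃ f : Fin n → Fin k, FeasibleSingle n k f} n := by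
  have hn' : (3:ℚ) ≤ n := by exact_mod_cast hn
  constructor
  · refine ⟨id, fun j => ?_⟩
    have h : Finset.univ.filter (fun i : Fin n => id i = j) = {j} := by
      ext i; simp
    rw [h]
    simp only [Finset.card_singleton]
    constructor
    · omega
    · push_cast; linarith
  · rintro k ⟨f, hf⟩
    have hinj : Function.Injective f := by
      intro i i' hii
      have hc := (hf (f i)).2
      have hcard : (Finset.univ.filter (fun a => f a = f i)).card ≤ 1 := by
        by_contra hcc
        push_neg at hcc
        have h2 : (2:ℚ) ≤ ((Finset.univ.filter (fun a => f a = f i)).card : ℚ) := by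
          exact_mod_cast hcc
        nlinarith
      exact Finset.card_le_one.mp hcard i (by simp) i' (by simp [hii])
    simpa using Fintype.card_le_of_injective f hinj

lemma ceil_facts (n : ℕ) (hn : 3 ≤ n) :
    (n:ℚ)^2 ≤ (⌈(n : ℚ)^2 / (2 * n - 1)⌉₊ : ℚ) * (2*(n:ℚ)-1) ∧
    ((⌈(n : ℚ)^2 / (2 * n - 1)⌉₊ : ℚ) - 1) * (2*(n:ℚ)-1) < (n:ℚ)^2 ∧
    (0:ℚ) < (⌈(n : ℚ)^2 / (2 * n - 1)⌉₊ : ℚ) := by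
  have hn' : (3:ℚ) ≤ n := by exact_mod_cast hn
  have hL : (0:ℚ) < 2*(n:ℚ) - 1 := by linarith
  have hpos : (0:ℚ) < (n:ℚ)^2 / (2*n-1) := by positivity
  have hceil1 : (n:ℚ)^2/(2*n-1) ≤ (⌈(n : ℚ)^2 / (2 * n - 1)⌉₊ : ℚ) := Nat.le_ceil _
  have hceil2 : ((⌈(n : ℚ)^2 / (2 * n - 1)⌉₊ : ℚ)) < (n:ℚ)^2/(2*n-1) + 1 :=
    Nat.ceil_lt_add_one hpos.le
  refine ⟨?_, ?_, lt_of_lt_of_le hpos hceil1⟩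
  · rw [div_le_iff₀ hL] at hceil1; linarith
  · have h : ((⌈(n : ℚ)^2 / (2 * n - 1)⌉₊ : ℚ)) - 1 < (n:ℚ)^2/(2*n-1) := by linarith
    rw [lt_div_iff₀ hL] at h; linarith

lemma multi_least (n : ℕ) (hn : 3 ≤ n) :
    IsLeast {k : ℕ | ∃ x : Fin n → Fin k → ℚ, FeasibleMulti n k x}
      ⌈(n : ℚ)^2 / (2 * n - 1)⌉₊ := by
  have hn' : (3:ℚ) ≤ n := by exact_mod_cast hn
  have hL : (0:ℚ) < 2*(n:ℚ) - 1 := by linarith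
  obtain ⟨h1, h2, h3⟩ := ceil_facts n hn
  constructor
  · refine ⟨fun i j => xq n (i:ℕ) (j:ℕ), ?_, ?_, ?_, ?_⟩
    · exact fun i j => xq_nonneg n hn i j
    · intro i
      exact le_of_eq (xq_row n _ hn h1 i i.2).symm
    · intro j
      exact xq_col n hn j
    · intro j
      exact xq_card n hn j
  · rintro k ⟨x, hpos, hrow, hcol, hsup⟩
    have hsum : (n:ℚ)^2 ≤ (k:ℚ)*(2*(n:ℚ)-1) := by
      have ha : (n:ℚ)*n ≤ ∑ i : Fin n, ∑ j : Fin k, x i j := by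
        calc (n:ℚ)*n = ∑ _i : Fin n, (n:ℚ) := by
              simp [Finset.sum_const, mul_comm]
          _ ≤ _ := Finset.sum_le_sum fun i _ => hrow i
      have hb : ∑ i : Fin n, ∑ j : Fin k, x i j = ∑ j : Fin k, ∑ i : Fin n, x i j :=
        Finset.sum_comm
      have hc : ∑ j : Fin k, ∑ i : Fin n, x i j ≤ (k:ℚ)*(2*(n:ℚ)-1) := by
        calc ∑ j : Fin k, ∑ i : Fin n, x i j ≤ ∑ _j : Fin k, (2*(n:ℚ)-1) :=
              Finset.sum_le_sum fun j _ => hcol j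
          _ = (k:ℚ)*(2*(n:ℚ)-1) := by simp [Finset.sum_const, mul_comm]; ring
      nlinarith
    apply Nat.ceil_le.mpr
    rw [div_le_iff₀ hL]
    linarith

lemma ratio_lt_two (n : ℕ) (hn : 3 ≤ n) :
    (n : ℚ) / (⌈(n : ℚ)^2 / (2 * n - 1)⌉₊ : ℚ) < 2 := by
  have hn' : (3:ℚ) ≤ n := by exact_mod_cast hn
  obtain ⟨h1, h2, h3⟩ := ceil_facts n hn
  rw [div_lt_iff₀ h3]
  nlinarith

lemma ratio_gt (ε : ℚ) (hε : 0 < ε) (n : ℕ) (hn : 3 ≤ n) (h5 : (5:ℚ) ≤ 2*ε*n) :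
    2 * (1 - ε) < (n : ℚ) / (⌈(n : ℚ)^2 / (2 * n - 1)⌉₊ : ℚ) := by
  have hn' : (3:ℚ) ≤ n := by exact_mod_cast hn
  have hL : (0:ℚ) < 2*(n:ℚ) - 1 := by linarith
  obtain ⟨h1, h2, h3⟩ := ceil_facts n hn
  set K : ℚ := (⌈(n : ℚ)^2 / (2 * n - 1)⌉₊ : ℚ) with hK
  rw [lt_div_iff₀ h3]
  rcases le_or_gt 1 ε with h | h
  · nlinarith
  · have hC : (0:ℚ) ≤ 2*(1-ε) := by linarith
    have hK2 : K*(2*(n:ℚ)-1) < (n:ℚ)^2 + 2*n - 1 := by linarith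
    have h5n : 5*(n:ℚ) ≤ 2*ε*(n:ℚ)^2 := by nlinarith
    have step : 2*(1-ε)*K*(2*(n:ℚ)-1) < (n:ℚ)*(2*(n:ℚ)-1) := by
      have := mul_le_mul_of_nonneg_left hK2.le hC
      nlinarith
    exact lt_of_mul_lt_mul_right step hL.le

end RatioAux

/-- For every `ε > 0` there is an instance (with `q_i = 1`, `Q = 3`, `p = n`,
`P = 2n - 1`) on which the single-instanced optimum is `m = n`, the
multi-instanced optimum is `m' = ⌈n²/(2n-1)⌉`, and `2(1-ε) < m/m' < 2`. -/
theorem ratio_approaches_two (ε : ℚ) (hε : 0 < ε) :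
    ∃ n : ℕ, 2 < n ∧
      IsLeast {k : ℕ | ∃ f : Fin n → Fin k, FeasibleSingle n k f} n ∧
      IsLeast {k : ℕ | ∃ x : Fin n → Fin k → ℚ, FeasibleMulti n k x}
        ⌈(n : ℚ)^2 / (2 * n - 1)⌉₊ ∧
      2 * (1 - ε) < (n : ℚ) / (⌈(n : ℚ)^2 / (2 * n - 1)⌉₊ : ℚ) ∧
      (n : ℚ) / (⌈(n : ℚ)^2 / (2 * n - 1)⌉₊ : ℚ) < 2 := by
  refine ⟨max 3 ⌈5/(2*ε)⌉₊, ?_, ?_, ?_, ?_, ?_⟩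
  case _ => omega
  all_goals {
    have hn : 3 ≤ max 3 ⌈5/(2*ε)⌉₊ := le_max_left _ _
    have h5 : (5:ℚ) ≤ 2*ε*(max 3 ⌈5/(2*ε)⌉₊ : ℕ) := by
      have h1 : (5/(2*ε) : ℚ) ≤ (⌈5/(2*ε)⌉₊ : ℚ) := Nat.le_ceil _
      have h2 : ((⌈5/(2*ε)⌉₊ : ℕ) : ℚ) ≤ ((max 3 ⌈5/(2*ε)⌉₊ : ℕ) : ℚ) := by
        exact_mod_cast le_max_right 3 _
      have h3 : 5/(2*ε) ≤ ((max 3 ⌈5/(2*ε)⌉₊ : ℕ) : ℚ) := le_trans h1 h2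
      have hε2 : (0:ℚ) < 2*ε := by linarith
      calc (5:ℚ) = (5/(2*ε))*(2*ε) := by field_simp
        _ ≤ ((max 3 ⌈5/(2*ε)⌉₊ : ℕ) : ℚ)*(2*ε) := by
            exact mul_le_mul_of_nonneg_right h3 hε2.le
        _ = 2*ε*((max 3 ⌈5/(2*ε)⌉₊ : ℕ) : ℚ) := by ring
    first
    | exact RatioAux.single_least _ hn
    | exact RatioAux.multi_least _ hn
    | exact RatioAux.ratio_gt ε hε _ hn h5
    | exact RatioAux.ratio_lt_two _ hn
  }
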